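/- If E is a fibrewise pointed space over B that is fibrewise contractible (fibrewise homotopy equivalent to B), then TC_{B,r}(E) = 0; conversely, if TC_{B,r}(E) = 0 then E is fibrewise homotopy equivalent to B. -/

import Mathlib

open Set

/-- Two continuous maps are fibrewise homotopic over `B`: there is a homotopy
whose every time-slice commutes with the projections to `B`. -/
def FibHomotopic {B X Y : Type*} [TopologicalSpace B] [TopologicalSpace X] [TopologicalSpace Y]
    (pX : X → B) (pY : Y → B) (f g : C(X, Y)) : Prop :=
  ∃ H : f.Homotopy g, ∀ (x : X) (t : unitInterval), pY (H (t, x)) = pX x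

/-- Sequential parametrized homotopic distance of a family of fibrewise maps:
the least `n` such that `X` admits an open cover by `n + 1` open sets on each of
which all the maps are pairwise fibrewise homotopic (`∞` if none exists). -/
noncomputable def fibDist {B X Y ι : Type*} [TopologicalSpace B] [TopologicalSpace X]
    [TopologicalSpace Y] (pX : X → B) (pY : Y → B) (f : ι → C(X, Y)) : ℕ∞ :=
  sInf {n : ℕ∞ | ∃ k : ℕ, (k : ℕ∞) = n ∧ ∃ U : Fin (k + 1) → Set X,
    (∀ i, IsOpen (U i)) ∧ (⋃ i, U i) = Set.univ ∧
    ∀ i s t, FibHomotopic (fun x : U i => pX (x : X)) pY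
      ((f s).restrict (U i)) ((f t).restrict (U i))}

/-- Fibrewise sectional category of a fibrewise map `f : E → X` over `B`: the least `k`
such that `X` has an open cover by `k + 1` open sets, each admitting a fibrewise map
`s : U → E` with `f ∘ s` fibrewise homotopic to the inclusion. -/
noncomputable def fibSecat {B E X : Type*} [TopologicalSpace B] [TopologicalSpace E]
    [TopologicalSpace X] (pE : E → B) (pX : X → B) (f : C(E, X)) : ℕ∞ :=
  sInf {n : ℕ∞ | ∃ k : ℕ, (k : ℕ∞) = n ∧ ∃ U : Fin (k + 1) → Set X,
    (∀ i, IsOpen (U i)) ∧ (⋃ i, U i) = Set.univ ∧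
    ∀ i, ∃ s : C(U i, E), (∀ x : U i, pE (s x) = pX (x : X)) ∧
      FibHomotopic (fun x : U i => pX (x : X)) pX (f.comp s)
        ⟨Subtype.val, continuous_subtype_val⟩}

/-- The fibrewise free path space of `Y` over `B`: pairs `(b, γ)` with `p_Y ∘ γ`
constant at `b`. -/
abbrev FibPathSpace {B Y : Type*} [TopologicalSpace B] [TopologicalSpace Y] (pY : Y → B) :
    Type _ := {z : B × C(unitInterval, Y) // ∀ t, pY (z.2 t) = z.1}

/-- The `r`-fold fibred product of `Y` over `B`. -/
abbrev FibPow {B Y : Type*} [TopologicalSpace B] [TopologicalSpace Y] (pY : Y → B) (r : ℕ) :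
    Type _ := {v : Fin r → Y // ∀ i j, pY (v i) = pY (v j)}

/-- The time `i / (r - 1)` in the unit interval. -/
noncomputable def evalTime (r : ℕ) (i : Fin r) : unitInterval :=
  ⟨(i : ℝ) / ((r : ℝ) - 1), by
    have h1 : 1 ≤ r := Nat.one_le_iff_ne_zero.mpr (by rintro rfl; exact i.elim0)
    have h0 : (0:ℝ) ≤ (r:ℝ) - 1 := by
      have : (1:ℝ) ≤ (r:ℝ) := by exact_mod_cast h1
      linarith
    have hi : (i:ℝ) ≤ (r:ℝ) - 1 := by
      have h2 : ((i:ℕ):ℝ) ≤ ((r - 1 : ℕ):ℝ) := Nat.cast_le.mpr (by omega)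
      rwa [Nat.cast_sub h1, Nat.cast_one] at h2
    exact ⟨div_nonneg (by positivity) h0, div_le_one_of_le₀ hi h0⟩⟩

/-- The fibrewise evaluation fibration `Π_{r,Y} : P_B(Y) → Y_B^r`, sending `(b, γ)` to
`(γ(0), γ(1/(r-1)), …, γ(1))`. -/
noncomputable def fibPi {B Y : Type*} [TopologicalSpace B] [TopologicalSpace Y] (pY : Y → B)
    (r : ℕ) : C(FibPathSpace pY, FibPow pY r) :=
  ⟨fun z => ⟨fun i => z.1.2 (evalTime r i),
      fun i j => (z.2 (evalTime r i)).trans (z.2 (evalTime r j)).symm⟩, by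
    apply Continuous.subtype_mk
    exact continuous_pi fun i =>
      (continuous_eval_const (evalTime r i)).comp
        (continuous_snd.comp continuous_subtype_val)⟩

/-- The `i`-th projection `Y_B^r → Y`. -/
def fibPrj {B Y : Type*} [TopologicalSpace B] [TopologicalSpace Y] (pY : Y → B) (r : ℕ)
    (i : Fin r) : C(FibPow pY r, Y) :=
  ⟨fun v => v.1 i, ((continuous_apply i).comp continuous_subtype_val)⟩

/-- Fibrewise homotopy equivalence of two fibrewise spaces over `B`. -/
def FibHtpyEquiv {B E E' : Type*} [TopologicalSpace B] [TopologicalSpace E] [TopologicalSpace E']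
    (pE : E → B) (pE' : E' → B) : Prop :=
  ∃ (f : C(E, E')) (g : C(E', E)), (∀ x, pE' (f x) = pE x) ∧ (∀ x, pE (g x) = pE' x) ∧
    FibHomotopic pE pE (g.comp f) (ContinuousMap.id E) ∧
    FibHomotopic pE' pE' (f.comp g) (ContinuousMap.id E')

section Helpers

variable {B X Y : Type*} [TopologicalSpace B] [TopologicalSpace X] [TopologicalSpace Y]
  {pX : X → B} {pY : Y → B}

theorem FibHomotopic.refl' (f : C(X, Y)) (hf : ∀ x, pY (f x) = pX x) :
    FibHomotopic pX pY f f :=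
  ⟨ContinuousMap.Homotopy.refl f, fun x _ => hf x⟩

theorem FibHomotopic.of_eq {f g : C(X, Y)} (h : f = g) (hf : ∀ x, pY (f x) = pX x) :
    FibHomotopic pX pY f g :=
  h ▸ FibHomotopic.refl' f hf

theorem FibHomotopic.symm {f g : C(X, Y)} (h : FibHomotopic pX pY f g) :
    FibHomotopic pX pY g f := by
  obtain ⟨H, hH⟩ := h
  exact ⟨H.symm, fun x t => by simpa using hH x _⟩

theorem FibHomotopic.trans {f g h : C(X, Y)} (h1 : FibHomotopic pX pY f g)
    (h2 : FibHomotopic pX pY g h) : FibHomotopic pX pY f h := by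
  obtain ⟨H1, hH1⟩ := h1
  obtain ⟨H2, hH2⟩ := h2
  refine ⟨H1.trans H2, fun x t => ?_⟩
  rw [ContinuousMap.Homotopy.trans_apply]
  split_ifs
  · exact hH1 x _
  · exact hH2 x _

end Helpers

/-- The fibrewise map `x ↦ (x, sE (pE x), …, sE (pE x))` into the fibred power. -/
noncomputable def wMap {B E : Type*} [TopologicalSpace B] [TopologicalSpace E] (r : ℕ)
    [NeZero r] (pE : E → B) (hpE : Continuous pE) (sE : C(B, E)) (hsE : ∀ b, pE (sE b) = b) :
    C(E, FibPow pE r) :=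
  ⟨fun x => ⟨fun i => if i = 0 then x else sE (pE x), fun i j => by
      by_cases hi : i = 0 <;> by_cases hj : j = 0 <;> simp [hi, hj, hsE]⟩, by
    apply Continuous.subtype_mk
    refine continuous_pi fun i => ?_
    by_cases hi : i = 0
    · simpa [hi] using continuous_id'
    · simpa [hi] using (map_continuous sE).comp' hpE⟩

theorem backward_aux {B E : Type*} [TopologicalSpace B] [TopologicalSpace E]
    (r : ℕ) [NeZero r] (hr : 2 ≤ r) (pE : E → B) (hpE : Continuous pE)
    (sE : C(B, E)) (hsE : ∀ b, pE (sE b) = b)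
    (s : C(FibPow pE r, FibPathSpace pE))
    (hs : ∀ v, (s v).1.1 = pE (v.1 0))
    (H : ((fibPi pE r).comp s).Homotopy (ContinuousMap.id _))
    (hH : ∀ v t, pE ((H (t, v)).1 0) = pE (v.1 0)) :
    FibHomotopic pE pE (sE.comp ⟨pE, hpE⟩) (ContinuousMap.id E) := by
  set w : C(E, FibPow pE r) := wMap r pE hpE sE hsE with hwdef
  have hw0 : ∀ x : E, (w x).1 0 = x := fun x => by
    show (if (0 : Fin r) = 0 then x else sE (pE x)) = x
    exact if_pos rfl
  have hQfib : ∀ (i : Fin r) (x : E), pE ((w x).1 i) = pE x := fun i x => by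
    rw [(w x).2 i 0, hw0]
  have hPfib : ∀ (x : E) (t : unitInterval), pE ((s (w x)).1.2 t) = pE x := fun x t => by
    rw [(s (w x)).2 t, hs (w x), hw0]
  -- the times 0 and 1
  set iLast : Fin r := ⟨r - 1, by omega⟩ with hiLast
  have hrR : ((r : ℝ) - 1) ≠ 0 := by
    have : (2 : ℝ) ≤ (r : ℝ) := by exact_mod_cast hr
    linarith
  have hT0 : evalTime r 0 = 0 := Subtype.ext (by simp [evalTime])
  have hT1 : evalTime r iLast = 1 := by
    refine Subtype.ext ?_
    show ((iLast : ℕ) : ℝ) / ((r : ℝ) - 1) = 1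
    have hv : ((iLast : ℕ) : ℝ) = (r : ℝ) - 1 := by
      show (((r - 1 : ℕ) : ℝ)) = (r : ℝ) - 1
      push_cast [Nat.cast_sub (by omega : 1 ≤ r)]
      ring
    rw [hv, div_self hrR]
  -- the interpolating maps
  set P : Fin r → C(E, E) := fun i =>
    ⟨fun x => (s (w x)).1.2 (evalTime r i), by
      exact (continuous_eval_const (evalTime r i)).comp
        (continuous_snd.comp (continuous_subtype_val.comp
          ((map_continuous s).comp (map_continuous w))))⟩ with hP
  set Q : Fin r → C(E, E) := fun i =>
    ⟨fun x => (w x).1 i, (continuous_apply i).comp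
      (continuous_subtype_val.comp (map_continuous w))⟩ with hQ
  -- homotopies P i ≃ Q i coming from H
  have N : ∀ i : Fin r, FibHomotopic pE pE (P i) (Q i) := by
    intro i
    refine ⟨⟨⟨fun p => (H (p.1, w p.2)).1 i, ?_⟩, ?_, ?_⟩, ?_⟩
    · exact ((continuous_apply i).comp continuous_subtype_val).comp
        (H.continuous.comp (continuous_fst.prodMk ((map_continuous w).comp continuous_snd)))
    · intro x
      show (H (0, w x)).1 i = (P i) x
      rw [H.apply_zero]
      rfl
    · intro x
      show (H (1, w x)).1 i = (Q i) x
      rw [H.apply_one]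
      rfl
    · intro x t
      show pE ((H (t, w x)).1 i) = pE x
      rw [(H (t, w x)).2 i 0, hH (w x) t, hw0]
  -- the path homotopy P 0 ≃ P iLast
  have A : FibHomotopic pE pE (P 0) (P iLast) := by
    refine ⟨⟨⟨fun p => (s (w p.2)).1.2 p.1, ?_⟩, ?_, ?_⟩, ?_⟩
    · exact continuous_eval.comp
        ((continuous_snd.comp (continuous_subtype_val.comp
          (((map_continuous s).comp (map_continuous w)).comp continuous_snd))).prodMk
          continuous_fst)
    · intro x
      show (s (w x)).1.2 0 = (P 0) x
      rw [hP]
      show _ = (s (w x)).1.2 (evalTime r 0)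
      rw [hT0]
    · intro x
      show (s (w x)).1.2 1 = (P iLast) x
      rw [hP]
      show _ = (s (w x)).1.2 (evalTime r iLast)
      rw [hT1]
    · intro x t
      exact hPfib x t
  -- the endpoint identifications
  have hiLne : iLast ≠ 0 := by
    intro hcon
    have := congrArg Fin.val hcon
    simp [hiLast] at this
    omega
  have hQlast : sE.comp ⟨pE, hpE⟩ = Q iLast := by
    refine ContinuousMap.ext fun x => ?_
    show sE (pE x) = (w x).1 iLast
    show sE (pE x) = if iLast = 0 then x else sE (pE x)
    rw [if_neg hiLne]
  have hQ0 : Q 0 = ContinuousMap.id E := ContinuousMap.ext fun x => hw0 x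
  exact ((FibHomotopic.of_eq hQlast fun x => hsE (pE x)).trans (N iLast).symm).trans
    ((A.symm.trans (N 0)).trans (FibHomotopic.of_eq hQ0 (hQfib 0)))

/-- For a fibrewise pointed space `E` over `B`: `E` is fibrewise contractible
(fibrewise homotopy equivalent to `B`) iff `TC_{B,r}(E) = 0`. -/
theorem stmt17 {B E : Type*} [TopologicalSpace B] [TopologicalSpace E]
    (r : ℕ) [NeZero r] (hr : 2 ≤ r) (pE : E → B) (hpE : Continuous pE)
    (sE : C(B, E)) (hsE : ∀ b, pE (sE b) = b) :
    FibHtpyEquiv pE (id : B → B) ↔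
      fibSecat (fun z : FibPathSpace pE => z.1.1) (fun v : FibPow pE r => pE (v.1 0))
        (fibPi pE r) = 0 := by
  constructor
  · rintro ⟨f, g, hf, hg, ⟨G, hG⟩, -⟩
    refine le_antisymm (sInf_le ?_) (zero_le)
    refine ⟨0, rfl, fun _ => Set.univ, fun _ => isOpen_univ, Set.iUnion_const _, fun i => ?_⟩
    have hb : Continuous fun v : (Set.univ : Set (FibPow pE r)) => pE ((v : FibPow pE r).1 0) :=
      hpE.comp (((continuous_apply 0).comp continuous_subtype_val).comp continuous_subtype_val)
    refine ⟨⟨fun v => ⟨(pE ((v : FibPow pE r).1 0),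
        ContinuousMap.const _ (g (pE ((v : FibPow pE r).1 0)))), fun t => hg _⟩, ?_⟩, ?_, ?_⟩
    · apply Continuous.subtype_mk
      exact hb.prodMk ((ContinuousMap.continuous_const'.comp (map_continuous g)).comp hb)
    · intro x; rfl
    · refine ⟨⟨⟨fun p => ⟨fun j => G (p.1, (p.2 : FibPow pE r).1 j),
          fun j j' => by rw [hG, hG]; exact (p.2 : FibPow pE r).2 j j'⟩, ?_⟩, ?_, ?_⟩, ?_⟩
      · apply Continuous.subtype_mk
        refine continuous_pi fun j => G.continuous.comp ?_
        exact continuous_fst.prodMk (((continuous_apply j).comp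
          (continuous_subtype_val.comp continuous_subtype_val)).comp continuous_snd)
      · intro v
        refine Subtype.ext (funext fun j => ?_)
        show G (0, _) = _
        rw [G.apply_zero]
        show g (f ((v : FibPow pE r).1 j)) = g (pE ((v : FibPow pE r).1 0))
        rw [show f ((v : FibPow pE r).1 j) = pE ((v : FibPow pE r).1 j) from hf _,
          (v : FibPow pE r).2 j 0]
      · intro v
        exact Subtype.ext (funext fun j => G.apply_one _)
      · intro x t
        show pE (G (t, _)) = _
        rw [hG]
  · intro h
    have hlt : fibSecat (fun z : FibPathSpace pE => z.1.1)
        (fun v : FibPow pE r => pE (v.1 0)) (fibPi pE r) < 1 := by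
      rw [h]; exact zero_lt_one
    rw [fibSecat] at hlt
    obtain ⟨a, haS, halt⟩ := sInf_lt_iff.mp hlt
    obtain ⟨k, hk, U, hUopen, hUcov, hUsec⟩ := haS
    have hk0 : k = 0 := by
      rw [← hk] at halt
      exact_mod_cast Nat.lt_one_iff.mp (by exact_mod_cast halt)
    subst hk0
    have hU : U 0 = Set.univ := by
      rw [← hUcov]
      ext x
      simp only [Set.mem_iUnion]
      exact ⟨fun hx => ⟨0, hx⟩, fun ⟨i, hi⟩ => by rwa [Fin.eq_zero i] at hi⟩
    obtain ⟨s, hs, Hh, hHfib⟩ := hUsec 0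
    have hVmem : ∀ v : FibPow pE r, v ∈ U 0 := fun v => hU.symm ▸ Set.mem_univ v
    set ι : C(FibPow pE r, ↥(U 0)) :=
      ⟨fun v => ⟨v, hVmem v⟩, Continuous.subtype_mk continuous_id (fun x => hVmem x)⟩ with hι
    set s' : C(FibPow pE r, FibPathSpace pE) := s.comp ι with hs'def
    have hs' : ∀ v, (s' v).1.1 = pE (v.1 0) := fun v => hs (ι v)
    have hmain : FibHomotopic pE pE (sE.comp ⟨pE, hpE⟩) (ContinuousMap.id E) := by
      refine backward_aux r hr pE hpE sE hsE s' hs'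
        ⟨⟨fun p => Hh (p.1, ι p.2), ?_⟩, fun v => Hh.apply_zero (ι v),
          fun v => Hh.apply_one (ι v)⟩ (fun v t => hHfib (ι v) t)
      exact Hh.continuous.comp (continuous_fst.prodMk ((map_continuous ι).comp continuous_snd))
    refine ⟨⟨pE, hpE⟩, sE, fun x => rfl, hsE, hmain, ?_⟩
    exact FibHomotopic.of_eq (ContinuousMap.ext fun b => hsE b) fun b => hsE b
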